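/- For every run w (in which every read event is preceded by a write on the same variable) and every set 𝔹 of valid blocks of w, the block-happens-before order ≺_𝔹 satisfies: rf_w ⊆ ≺_𝔹, po_w ⊆ ≺_𝔹, and ≺_𝔹 ⊆ ≺_M, where ≺_M is the trace partial order of w. Moreover, if 𝔹 = ∅ then ≺_𝔹 = ≺_M. -/

import Mathlib

namespace TraceTheory

inductive Op : Type
  | rd : Op
  | wr : Op
deriving DecidableEq

structure Lbl (T X : Type) : Type where
  thread : T
  op : Op
  var : X
deriving DecidableEq

/-- A concurrent program run: a finite string over the concurrent alphabet. -/
abbrev Run (T X : Type) := List (Lbl T X)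

/-- An event of a run: a symbol together with its occurrence number. -/
abbrev Event (T X : Type) := Lbl T X × ℕ

variable {T X : Type} [DecidableEq T] [DecidableEq X]

/-- Dependence: same thread, or same variable with at least one write. -/
def Dep (a b : Lbl T X) : Prop :=
  a.thread = b.thread ∨ (a.var = b.var ∧ (a.op = Op.wr ∨ b.op = Op.wr))

/-- The event at position `i` of run `w`. -/
def evAt (w : Run T X) (i : Fin w.length) : Event T X :=
  (w.get i, (w.take (i : ℕ)).count (w.get i))

def HasEv (w : Run T X) (e : Event T X) : Prop := ∃ i : Fin w.length, evAt w i = e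

/-- `e` occurs (strictly) before `f` in `w`. -/
def EvBefore (w : Run T X) (e f : Event T X) : Prop :=
  ∃ i j : Fin w.length, (i : ℕ) < (j : ℕ) ∧ evAt w i = e ∧ evAt w j = f

/-- Program order. -/
def po (w : Run T X) (e f : Event T X) : Prop :=
  e.1.thread = f.1.thread ∧ EvBefore w e f

/-- Reads-from: `f` is a read that observes the write `e` (the last write on
the same variable before `f`). -/
def rf (w : Run T X) (e f : Event T X) : Prop :=
  e.1.op = Op.wr ∧ f.1.op = Op.rd ∧ e.1.var = f.1.var ∧
  ∃ i j : Fin w.length, evAt w i = e ∧ evAt w j = f ∧ (i : ℕ) < (j : ℕ) ∧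
    ∀ k : Fin w.length, (i : ℕ) < (k : ℕ) → (k : ℕ) < (j : ℕ) →
      ¬ ((w.get k).op = Op.wr ∧ (w.get k).var = f.1.var)

/-- Every read is preceded by a write on the same variable. -/
def WellFormed (w : Run T X) : Prop :=
  ∀ j : Fin w.length, (w.get j).op = Op.rd →
    ∃ i : Fin w.length, (i : ℕ) < (j : ℕ) ∧ (w.get i).op = Op.wr ∧
      (w.get i).var = (w.get j).var

/-- Reads-from equivalence. -/
def RfEquiv (w w' : Run T X) : Prop :=
  w.Perm w' ∧ po w = po w' ∧ rf w = rf w'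

/-- A single Mazurkiewicz swap of two adjacent independent symbols. -/
inductive MazSwap : Run T X → Run T X → Prop
  | swap (u v : Run T X) (a b : Lbl T X) (h : ¬ Dep a b) :
      MazSwap (u ++ a :: b :: v) (u ++ b :: a :: v)

/-- Trace (Mazurkiewicz) equivalence: the smallest equivalence closed under swaps. -/
def MazEquiv (w w' : Run T X) : Prop := Relation.EqvGen MazSwap w w'

/-- The trace (happens-before) partial order of a run. -/
def MazOrder (w : Run T X) : Event T X → Event T X → Prop :=
  Relation.TransGen (fun e f => EvBefore w e f ∧ Dep e.1 f.1)

/-- `B` is a block word (one write followed by reads of the same variable) that is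
valid as a contiguous segment whose suffix (remainder of the run) is `s`:
no read after the block reads from the block's write. -/
def ValidBlockSeg (B s : Run T X) : Prop :=
  ∃ a rest, B = a :: rest ∧ a.op = Op.wr ∧
    (∀ b ∈ rest, b.op = Op.rd ∧ b.var = a.var) ∧
    ∀ j : Fin s.length, (s.get j).op = Op.rd → (s.get j).var = a.var →
      ∃ m : Fin s.length, (m : ℕ) < (j : ℕ) ∧ (s.get m).op = Op.wr ∧
        (s.get m).var = a.var

def ThreadsDisjoint (B B' : Run T X) : Prop :=
  ∀ a ∈ B, ∀ b ∈ B', a.thread ≠ b.thread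

/-- A single block-equivalence step (clause (i): block swap, clause (ii): event swap). -/
inductive BlkSwap : Run T X → Run T X → Prop
  | block (p B B' s : Run T X) (hB : ValidBlockSeg B (B' ++ s)) (hB' : ValidBlockSeg B' s)
      (hd : ThreadsDisjoint B B') :
      BlkSwap (p ++ B ++ B' ++ s) (p ++ B' ++ B ++ s)
  | single (p s : Run T X) (a b : Lbl T X) (ht : a.thread ≠ b.thread)
      (h : a.var ≠ b.var ∨ (a.op = Op.rd ∧ b.op = Op.rd)) :
      BlkSwap (p ++ a :: b :: s) (p ++ b :: a :: s)

/-- Block equivalence: smallest reflexive transitive relation closed under the swaps. -/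
def BlkEquiv : Run T X → Run T X → Prop := Relation.ReflTransGen BlkSwap

/-- The set of events of the segment `B` of a run, given the prefix `p` preceding it. -/
def segEvents (p B : Run T X) : Set (Event T X) :=
  { e | ∃ i : Fin B.length, e = (B.get i, ((p ++ B.take (i : ℕ)).count (B.get i))) }

/-- Block-equivalence steps where block swaps are restricted to blocks from `𝔹`. -/
inductive BlkSwapIn (𝔹 : Set (Set (Event T X))) : Run T X → Run T X → Prop
  | block (p B B' s : Run T X) (hB : ValidBlockSeg B (B' ++ s)) (hB' : ValidBlockSeg B' s)
      (hBmem : segEvents p B ∈ 𝔹) (hB'mem : segEvents (p ++ B) B' ∈ 𝔹)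
      (hd : ThreadsDisjoint B B') :
      BlkSwapIn 𝔹 (p ++ B ++ B' ++ s) (p ++ B' ++ B ++ s)
  | single (p s : Run T X) (a b : Lbl T X) (ht : a.thread ≠ b.thread)
      (h : a.var ≠ b.var ∨ (a.op = Op.rd ∧ b.op = Op.rd)) :
      BlkSwapIn 𝔹 (p ++ a :: b :: s) (p ++ b :: a :: s)

/-- Block equivalence restricted to the set of blocks `𝔹`. -/
def BlkEquivIn (𝔹 : Set (Set (Event T X))) : Run T X → Run T X → Prop :=
  Relation.ReflTransGen (BlkSwapIn 𝔹)

/-- A valid block of `w` (as a set of events): a write event together with exactly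
the reads of `w` that read from it. -/
def IsValidBlockOf (w : Run T X) (S : Set (Event T X)) : Prop :=
  ∃ e : Event T X, HasEv w e ∧ e.1.op = Op.wr ∧ S = insert e { f | rf w e f }

def ValidBlocks (w : Run T X) (𝔹 : Set (Set (Event T X))) : Prop :=
  ∀ S ∈ 𝔹, IsValidBlockOf w S

/-- Block `S` occurs as a contiguous subword of `u`. -/
def SerialIn (u : Run T X) (S : Set (Event T X)) : Prop :=
  ∃ p B s, u = p ++ B ++ s ∧ segEvents p B = S

/-- Liberal atomicity of a run `v` with respect to a set of blocks `𝔹`. -/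
def LiberallyAtomic (v : Run T X) (𝔹 : Set (Set (Event T X))) : Prop :=
  ∃ u, BlkEquivIn 𝔹 u v ∧ ∀ S ∈ 𝔹, SerialIn u S

/-- Conflict serializability of a run `v` with respect to a set of blocks `𝔹`. -/
def ConflictSerializable (v : Run T X) (𝔹 : Set (Set (Event T X))) : Prop :=
  ∃ u, MazEquiv u v ∧ ∀ S ∈ 𝔹, SerialIn u S

/-- The block-happens-before order `≺_𝔹`. -/
def Bhb (w : Run T X) (𝔹 : Set (Set (Event T X))) : Event T X → Event T X → Prop :=
  Relation.TransGen (fun e f =>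
    EvBefore w e f ∧ Dep e.1 f.1 ∧
    ¬ (e.1.thread ≠ f.1.thread ∧ ∃ B ∈ 𝔹, ∃ B' ∈ 𝔹, B ≠ B' ∧ e ∈ B ∧ f ∈ B'))

/-- The saturated order `⪻_𝔹` on events (`Sum.inl`) and blocks (`Sum.inr`). -/
inductive Sat (w : Run T X) (𝔹 : Set (Set (Event T X))) :
    (Event T X ⊕ Set (Event T X)) → (Event T X ⊕ Set (Event T X)) → Prop
  | base {e f : Event T X} : Bhb w 𝔹 e f → Sat w 𝔹 (Sum.inl e) (Sum.inl f)
  | toBlk {e f : Event T X} {B B' : Set (Event T X)} :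
      e.1.var = f.1.var → B ∈ 𝔹 → B' ∈ 𝔹 → e ∈ B → f ∈ B' → B ≠ B' →
      Sat w 𝔹 (Sum.inl e) (Sum.inl f) → Sat w 𝔹 (Sum.inr B) (Sum.inr B')
  | ofBlk {B B' : Set (Event T X)} {e f : Event T X} :
      Sat w 𝔹 (Sum.inr B) (Sum.inr B') → e ∈ B → f ∈ B' →
      Sat w 𝔹 (Sum.inl e) (Sum.inl f)

/-- The event part of the saturated order `⪻_𝔹`. -/
def SatEv (w : Run T X) (𝔹 : Set (Set (Event T X))) (e f : Event T X) : Prop :=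
  Sat w 𝔹 (Sum.inl e) (Sum.inl f)

def SameVarBlocks (B B' : Set (Event T X)) : Prop :=
  ∃ x : X, (∀ e ∈ B, e.1.var = x) ∧ (∀ e ∈ B', e.1.var = x)

/-- No two distinct blocks of `𝔹` on the same variable overlap in `v`. -/
def NoOverlap (v : Run T X) (𝔹 : Set (Set (Event T X))) : Prop :=
  ∀ B ∈ 𝔹, ∀ B' ∈ 𝔹, B ≠ B' → SameVarBlocks B B' →
    (∀ e ∈ B, ∀ f ∈ B', EvBefore v e f) ∨ (∀ e ∈ B, ∀ f ∈ B', EvBefore v f e)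

/-- `v` is a proper linearization (of the events of `w`) of the order `ord`. -/
def ProperLin (w : Run T X) (𝔹 : Set (Set (Event T X)))
    (ord : Event T X → Event T X → Prop) (v : Run T X) : Prop :=
  w.Perm v ∧ (∀ e f, ord e f → EvBefore v e f) ∧ NoOverlap v 𝔹


/-- `e` is causally ordered before `f` under reads-from equivalence:
`e` occurs before `f` in every reads-from equivalent run. -/
def CausOrd (w : Run T X) (e f : Event T X) : Prop :=
  ∀ w', RfEquiv w w' → EvBefore w' e f

/-- `e` and `f` are causally concurrent under reads-from equivalence. -/
def CausConc (w : Run T X) (e f : Event T X) : Prop :=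
  ¬ CausOrd w e f ∧ ¬ CausOrd w f e

lemma count_take_mono {α : Type _} [DecidableEq α] (l : List α) (a : α) {m n : ℕ}
    (h : m ≤ n) : (l.take m).count a ≤ (l.take n).count a := by
  conv_rhs => rw [← List.take_append_drop m (l.take n)]
  rw [List.take_take, min_eq_left h, List.count_append]
  exact Nat.le_add_right _ _

lemma evAt_ne (w : Run T X) {i j : Fin w.length} (h : (i : ℕ) < (j : ℕ)) :
    evAt w i ≠ evAt w j := by
  intro heq
  have hg : w.get i = w.get j := congrArg Prod.fst heq
  have hc : (w.take (i : ℕ)).count (w.get i) = (w.take (j : ℕ)).count (w.get j) :=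
    congrArg Prod.snd heq
  have h1 : (w.take ((i : ℕ) + 1)).count (w.get i)
      = (w.take (i : ℕ)).count (w.get i) + 1 := by
    rw [List.take_succ, List.count_append]
    have : w[(i : ℕ)]? = some (w.get i) := by
      rw [List.getElem?_eq_getElem i.isLt]
      simp [List.get_eq_getElem]
    rw [this]
    simp
  have h2 : (w.take ((i : ℕ) + 1)).count (w.get i)
      ≤ (w.take (j : ℕ)).count (w.get i) := count_take_mono w _ h
  rw [hg] at h1 h2 hc
  omega

lemma evAt_injective (w : Run T X) : Function.Injective (evAt w) := by
  intro i j h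
  rcases Nat.lt_trichotomy (i : ℕ) (j : ℕ) with hlt | heq | hgt
  · exact absurd h (evAt_ne w hlt)
  · exact Fin.ext heq
  · exact absurd h.symm (evAt_ne w hgt)

lemma rf_write_unique (w : Run T X) {e e' f : Event T X}
    (h : rf w e f) (h' : rf w e' f) : e = e' := by
  obtain ⟨hew, hfr, hv, i, j, hie, hjf, hij, hnb⟩ := h
  obtain ⟨hew', _, hv', i', j', hie', hjf', hij', hnb'⟩ := h'
  have hjj : j = j' := evAt_injective w (hjf.trans hjf'.symm)
  subst hjj
  have hgi' : w.get i' = e'.1 := congrArg Prod.fst hie'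
  have hgi : w.get i = e.1 := congrArg Prod.fst hie
  rcases Nat.lt_trichotomy (i : ℕ) (i' : ℕ) with hlt | heq | hgt
  · exact absurd ⟨hgi' ▸ hew', hgi' ▸ hv'⟩ (hnb i' hlt hij')
  · have : i = i' := Fin.ext heq
    subst this
    exact hie.symm.trans hie'
  · exact absurd ⟨hgi ▸ hew, hgi ▸ hv⟩ (hnb' i hgt hij)

/-- Characterization of `≺_𝔹`: block happens-before contains
reads-from and program order, is contained in the trace order `≺_M`, and
coincides with `≺_M` when `𝔹 = ∅`. -/
theorem bhb_characterization
    (T X : Type) [DecidableEq T] [DecidableEq X]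
    (w : Run T X) (hwf : WellFormed w)
    (𝔹 : Set (Set (Event T X))) (hval : ValidBlocks w 𝔹) :
    (∀ e f : Event T X, rf w e f → Bhb w 𝔹 e f) ∧
    (∀ e f : Event T X, po w e f → Bhb w 𝔹 e f) ∧
    (∀ e f : Event T X, Bhb w 𝔹 e f → MazOrder w e f) ∧
    (𝔹 = ∅ → Bhb w 𝔹 = MazOrder w) := by
  refine ⟨?_, ?_, ?_, ?_⟩
  · -- rf ⊆ Bhb
    intro e f hrf
    apply Relation.TransGen.single
    obtain ⟨hew, hfr, hv, i, j, hie, hjf, hij, hnb⟩ := hrf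
    refine ⟨⟨i, j, hij, hie, hjf⟩, Or.inr ⟨hv, Or.inl hew⟩, ?_⟩
    rintro ⟨hth, B, hB, B', hB', hne, heB, hfB'⟩
    obtain ⟨b, _, hbw, rfl⟩ := hval B hB
    obtain ⟨b', _, hb'w, rfl⟩ := hval B' hB'
    -- e ∈ insert b {g | rf w b g}: e must be b since e is a write
    have heb : e = b := by
      rcases heB with heb | hrfe
      · exact heb
      · exact absurd (hrfe.2.1.symm.trans hew) (by simp)
    -- f ∈ insert b' {g | rf w b' g}: f must read from b' since f is a read
    have hfb' : rf w b' f := by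
      rcases hfB' with hfb | hrff
      · exact absurd (hfb ▸ hfr : b'.1.op = Op.rd) (by rw [hb'w]; simp)
      · exact hrff
    have : e = b' :=
      rf_write_unique w ⟨hew, hfr, hv, i, j, hie, hjf, hij, hnb⟩ hfb'
    exact hne (by rw [← heb, ← this])
  · -- po ⊆ Bhb
    rintro e f ⟨hth, hbef⟩
    exact Relation.TransGen.single
      ⟨hbef, Or.inl hth, fun hcon => hcon.1 hth⟩
  · -- Bhb ⊆ MazOrder
    intro e f h
    exact Relation.TransGen.mono (fun a b hab => ⟨hab.1, hab.2.1⟩) _ _ h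
  · -- 𝔹 = ∅ → Bhb = MazOrder
    rintro rfl
    funext e f
    apply propext
    constructor
    · intro h; exact Relation.TransGen.mono (fun a b hab => ⟨hab.1, hab.2.1⟩) _ _ h
    · intro h
      exact Relation.TransGen.mono (fun a b hab =>
        ⟨hab.1, hab.2, by rintro ⟨_, B, hB, _⟩; exact hB⟩) _ _ h

end TraceTheory
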